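/- The improper integral ∫₀^∞ (1 + x⁴ - x²·√(2 + x⁴)) dx converges and equals 2^(3/4)·√π·Γ(3/4)/(5·Γ(5/4)). -/

import Mathlib

open MeasureTheory Set Filter Real
noncomputable section
namespace Foldy

lemma two_add_pos (x : ℝ) : 0 < 2 + x^4 := by positivity
lemma s_pos (x : ℝ) : 0 < Real.sqrt (2 + x^4) := Real.sqrt_pos.mpr (two_add_pos x)
lemma s_sq (x : ℝ) : Real.sqrt (2 + x^4) ^ 2 = 2 + x ^ 4 := Real.sq_sqrt (two_add_pos x).le
def h (x : ℝ) : ℝ := 1 + x^4 - x^2 * Real.sqrt (2 + x^4)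
def k (x : ℝ) : ℝ := x^2 / ((2 + x^4) * Real.sqrt (2 + x^4))
def G (x : ℝ) : ℝ := x + x^5/5 - x^3 * Real.sqrt (2 + x^4)/5 - 4*x^3/(5*Real.sqrt (2 + x^4))

lemma hasDerivAt_G (x : ℝ) : HasDerivAt G (h x - 16/5 * k x) x := by
  have ht0 := s_pos x
  have ht := s_sq x
  have hinner : HasDerivAt (fun x : ℝ => 2 + x^4) (4*x^3) x := by
    simpa using (hasDerivAt_pow 4 x).const_add 2
  have hsqrt : HasDerivAt (fun x : ℝ => Real.sqrt (2 + x^4))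
      (1 / (2 * Real.sqrt (2 + x^4)) * (4*x^3)) x :=
    (Real.hasDerivAt_sqrt (two_add_pos x).ne').comp x hinner
  have d1 : HasDerivAt (fun x : ℝ => x + x^5/5) (1 + x^4) x := by
    have := (hasDerivAt_id x).add ((hasDerivAt_pow 5 x).div_const 5)
    refine this.congr_deriv ?_
    rw [show (5:ℕ) - 1 = 4 from rfl]; push_cast; ring
  have d2 : HasDerivAt (fun x : ℝ => x^3 * Real.sqrt (2 + x^4))
      (3*x^2 * Real.sqrt (2 + x^4) + x^3 * (1 / (2 * Real.sqrt (2 + x^4)) * (4*x^3))) x := by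
    have := (hasDerivAt_pow 3 x).mul hsqrt
    exact this.congr_deriv (by norm_num)
  have d3 : HasDerivAt (fun x : ℝ => 4*x^3/(5*Real.sqrt (2 + x^4)))
      ((4*(3*x^2) * (5*Real.sqrt (2 + x^4)) -
        4*x^3 * (5*(1 / (2 * Real.sqrt (2 + x^4)) * (4*x^3)))) / (5*Real.sqrt (2 + x^4))^2) x := by
    have hd : HasDerivAt (fun x : ℝ => 4*x^3) (4*(3*x^2)) x := by
      have := (hasDerivAt_pow 3 x).const_mul 4
      exact this.congr_deriv (by norm_num)
    have hden : HasDerivAt (fun x : ℝ => 5*Real.sqrt (2 + x^4))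
        (5*(1 / (2 * Real.sqrt (2 + x^4)) * (4*x^3))) x := hsqrt.const_mul 5
    exact hd.div hden (by positivity)
  have dG := (d1.sub (d2.div_const 5)).sub d3
  refine dG.congr_deriv ?_
  symm
  unfold h k
  set t := Real.sqrt (2 + x^4) with hts
  field_simp
  linear_combination (-8*x^2*t^2 - 4*x^6*t^2 + 16*x^6) * ht

lemma s_ge (x : ℝ) : x ^ 2 ≤ Real.sqrt (2 + x^4) := by
  rw [show x ^ 2 = Real.sqrt (x ^ 4) by rw [show x ^ 4 = (x^2)^2 by ring, Real.sqrt_sq (by positivity)]]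
  exact Real.sqrt_le_sqrt (by nlinarith [sq_nonneg (x^2)])

lemma G_quot (x : ℝ) :
    G x * ((((5*x+x^5) * Real.sqrt (2 + x^4) + (x^7+6*x^3))) * (5 * Real.sqrt (2 + x^4)))
      = x^2*(50+9*x^4) := by
  have ht0 := s_pos x
  have ht := s_sq x
  set t := Real.sqrt (2 + x^4) with hts
  have hG5t : G x * (5*t) = (5*x+x^5)*t - (x^7+6*x^3) := by
    unfold G
    field_simp
    linear_combination (-x^3*t) * ht
  have key : ((5*x+x^5)*t - (x^7+6*x^3)) * ((5*x+x^5)*t + (x^7+6*x^3))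
      = x^2*(50+9*x^4) := by
    linear_combination ((5*x+x^5)^2) * ht
  calc G x * (((5*x+x^5)*t + (x^7+6*x^3)) * (5*t))
      = (G x * (5*t)) * ((5*x+x^5)*t + (x^7+6*x^3)) := by ring
    _ = ((5*x+x^5)*t - (x^7+6*x^3)) * ((5*x+x^5)*t + (x^7+6*x^3)) := by rw [hG5t]
    _ = x^2*(50+9*x^4) := key

lemma G_tendsto : Tendsto G atTop (nhds 0) := by
  have hupper : Tendsto (fun x : ℝ => 12/x^3) atTop (nhds 0) :=
    Tendsto.div_atTop tendsto_const_nhds (tendsto_pow_atTop three_ne_zero)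
  refine tendsto_of_tendsto_of_tendsto_of_le_of_le' tendsto_const_nhds hupper ?_ ?_
  · filter_upwards [eventually_ge_atTop (1:ℝ)] with x hx
    have ht0 := s_pos x
    have hD : 0 < (((5*x+x^5) * Real.sqrt (2 + x^4) + (x^7+6*x^3))) * (5 * Real.sqrt (2 + x^4)) := by
      positivity
    nlinarith [G_quot x, sq_nonneg x, sq_nonneg (x^2)]
  · filter_upwards [eventually_ge_atTop (1:ℝ)] with x hx
    have ht0 := s_pos x
    have ht2 := s_ge x
    have hx3 : (0:ℝ) < x^3 := by positivity
    have hD : (((5*x+x^5) * Real.sqrt (2 + x^4) + (x^7+6*x^3))) * (5 * Real.sqrt (2 + x^4))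
        ≥ 5 * x^9 := by
      set s := Real.sqrt (2 + x^4) with hs
      have e : ((5*x+x^5) * s + (x^7+6*x^3)) * (5 * s)
          = 25*x*s^2 + 5*x^5*s^2 + 5*x^7*s + 30*x^3*s := by ring
      rw [e]
      have h1 : 5*x^7*s ≥ 5*x^7*x^2 := by
        apply mul_le_mul_of_nonneg_left ht2 (by positivity)
      have h2 : (0:ℝ) ≤ 25*x*s^2 := by positivity
      have h3 : (0:ℝ) ≤ 5*x^5*s^2 := by positivity
      have h4 : (0:ℝ) ≤ 30*x^3*s := by positivity
      nlinarith [h1]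
    have hDpos : (0:ℝ) < (((5*x+x^5) * Real.sqrt (2 + x^4) + (x^7+6*x^3))) * (5 * Real.sqrt (2 + x^4)) := by
      positivity
    have hGx : G x = x^2*(50+9*x^4) /
        ((((5*x+x^5) * Real.sqrt (2 + x^4) + (x^7+6*x^3))) * (5 * Real.sqrt (2 + x^4))) := by
      rw [eq_div_iff hDpos.ne']; exact G_quot x
    rw [hGx, div_le_div_iff₀ hDpos (by positivity)]
    nlinarith [sq_nonneg x, sq_nonneg (x^2-1), sq_nonneg (x^3-x)]



lemma h_eq (x : ℝ) : h x = 1 / (1 + x^4 + x^2 * Real.sqrt (2 + x^4)) := by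
  have hs := s_sq x
  have hd : 0 < 1 + x^4 + x^2 * Real.sqrt (2 + x^4) := by
    have := s_pos x; positivity
  rw [h, eq_div_iff hd.ne']
  nlinarith [hs]

lemma h_nonneg (x : ℝ) : 0 ≤ h x := by
  rw [h_eq]; positivity

lemma h_le (x : ℝ) : h x ≤ (1 + x^2)⁻¹ := by
  rw [h_eq, one_div]
  apply inv_anti₀ (by positivity)
  have h1 : (1:ℝ) ≤ Real.sqrt (2 + x^4) := by
    have h2 : Real.sqrt 1 ≤ Real.sqrt (2 + x^4) := Real.sqrt_le_sqrt (by nlinarith [sq_nonneg (x^2)])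
    simpa using h2
  nlinarith [sq_nonneg x]

lemma cont_h : Continuous h := by
  unfold h; continuity

lemma integrable_h : IntegrableOn h (Ioi (0:ℝ)) volume := by
  apply Integrable.mono' (integrable_inv_one_add_sq.restrict (s := Ioi 0))
    cont_h.aestronglyMeasurable.restrict
  filter_upwards with x
  rw [Real.norm_eq_abs, abs_of_nonneg (h_nonneg x)]
  exact h_le x

lemma k_nonneg (x : ℝ) : 0 ≤ k x := by
  unfold k; positivity

lemma k_le (x : ℝ) : k x ≤ (1 + x^2)⁻¹ := by
  unfold k
  have hs := s_pos x
  have h2 := s_ge x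
  rw [div_le_iff₀ (by positivity)]
  have : x^2 * (1 + x^2) ≤ (2 + x^4) * x^2 := by nlinarith [sq_nonneg (x^2 - 1)]
  calc x^2 = (1 + x^2)⁻¹ * (x^2 * (1+x^2)) := by field_simp
    _ ≤ (1 + x^2)⁻¹ * ((2 + x^4) * Real.sqrt (2 + x^4)) := by
        apply mul_le_mul_of_nonneg_left _ (by positivity)
        calc x^2 * (1 + x^2) ≤ (2 + x^4) * x^2 := this
          _ ≤ (2 + x^4) * Real.sqrt (2 + x^4) :=
              mul_le_mul_of_nonneg_left h2 (two_add_pos x).le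

lemma cont_k : Continuous k := by
  unfold k
  apply Continuous.div (by continuity) (by continuity)
  intro x
  have := s_pos x; have := two_add_pos x; positivity

lemma integrable_k : IntegrableOn k (Ioi (0:ℝ)) volume := by
  apply Integrable.mono' (integrable_inv_one_add_sq.restrict (s := Ioi 0))
    cont_k.aestronglyMeasurable.restrict
  filter_upwards with x
  rw [Real.norm_eq_abs, abs_of_nonneg (k_nonneg x)]
  exact k_le x


lemma G_zero : G 0 = 0 := by
  have : Real.sqrt (2 + (0:ℝ)^4) ≠ 0 := (s_pos 0).ne'
  simp [G]

lemma integral_h_eq : ∫ x in Ioi (0:ℝ), h x = 16/5 * ∫ x in Ioi (0:ℝ), k x := by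
  have hik : Integrable (fun x => 16/5 * k x) (volume.restrict (Ioi (0:ℝ))) :=
    integrable_k.const_mul (16/5)
  have hint : IntegrableOn (fun x => h x - 16/5 * k x) (Ioi (0:ℝ)) volume :=
    integrable_h.sub hik
  have h0 : ∫ x in Ioi (0:ℝ), (h x - 16/5 * k x) = 0 - G 0 :=
    integral_Ioi_of_hasDerivAt_of_tendsto' (fun x _ => hasDerivAt_G x) hint G_tendsto
  rw [G_zero, sub_zero] at h0
  rw [integral_sub integrable_h hik, integral_const_mul] at h0
  linarith




def g (t : ℝ) : ℝ := (1/4) * t ^ (-(1:ℝ)/4) / ((2 + t) * Real.sqrt (2 + t))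

lemma integrand_simp (u : ℝ) (hu0 : 0 < u) (hu1 : u < 1) :
    |2/(1-u)^2| • g (2*u/(1-u))
      = 2 ^ (-(11:ℝ)/4) * (u ^ (-(1:ℝ)/4) * (1-u) ^ (-(1:ℝ)/4)) := by
  have hb : (0:ℝ) < 1 - u := by linarith
  have h2b : (0:ℝ) < 2/(1-u) := by positivity
  have h2u : (0:ℝ) < 2*u/(1-u) := by positivity
  rw [smul_eq_mul, abs_of_pos (by positivity : (0:ℝ) < 2/(1-u)^2)]
  unfold g
  have e1 : 2 + 2*u/(1-u) = 2/(1-u) := by field_simp; ring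
  rw [e1]
  have hL : (0:ℝ) < 2/(1-u)^2 * ((1/4) * (2*u/(1-u)) ^ (-(1:ℝ)/4) / ((2/(1-u)) * Real.sqrt (2/(1-u)))) := by
    have := Real.rpow_pos_of_pos h2u (-(1:ℝ)/4)
    have := Real.sqrt_pos.mpr h2b
    positivity
  have hR : (0:ℝ) < 2 ^ (-(11:ℝ)/4) * (u ^ (-(1:ℝ)/4) * (1-u) ^ (-(1:ℝ)/4)) := by
    have := Real.rpow_pos_of_pos hu0 (-(1:ℝ)/4)
    have := Real.rpow_pos_of_pos hb (-(1:ℝ)/4)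
    have := Real.rpow_pos_of_pos two_pos (-(11:ℝ)/4)
    positivity
  rw [← Real.exp_log hL, ← Real.exp_log hR]
  congr 1
  rw [Real.log_mul (by positivity) (by positivity), Real.log_div (by norm_num) (by positivity),
      Real.log_pow,
      Real.log_div (by positivity) (by positivity : ((2/(1-u)) * Real.sqrt (2/(1-u))) ≠ 0),
      Real.log_mul (by norm_num) (ne_of_gt (Real.rpow_pos_of_pos h2u _)),
      Real.log_mul h2b.ne' (ne_of_gt (Real.sqrt_pos.mpr h2b)),
      Real.log_sqrt h2b.le, Real.log_rpow h2u, Real.log_div (by positivity) hb.ne',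
      Real.log_mul two_ne_zero hu0.ne', Real.log_div two_ne_zero hb.ne',
      Real.log_mul (by positivity) (by positivity),
      Real.log_mul (ne_of_gt (Real.rpow_pos_of_pos hu0 _)) (ne_of_gt (Real.rpow_pos_of_pos hb _)),
      Real.log_rpow two_pos, Real.log_rpow hu0, Real.log_rpow hb]
  have h14 : Real.log (1/4) = -(2*Real.log 2) := by
    rw [one_div, Real.log_inv, show (4:ℝ) = 2^2 by norm_num, Real.log_pow]
    push_cast; ring
  rw [h14]
  ring



open intervalIntegral in
lemma beta_Ioo : ∫ u in Ioo (0:ℝ) 1, u ^ (-(1:ℝ)/4) * (1-u) ^ (-(1:ℝ)/4)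
    = Real.Gamma (3/4) * Real.Gamma (3/4) / Real.Gamma (3/2) := by
  have hgam := Complex.Gamma_mul_Gamma_eq_betaIntegral
    (s := 3/4) (t := 3/4) (by norm_num) (by norm_num)
  have hbeta : Complex.betaIntegral (3/4) (3/4)
      = ((∫ u in Ioo (0:ℝ) 1, u ^ (-(1:ℝ)/4) * (1-u) ^ (-(1:ℝ)/4) : ℝ) : ℂ) := by
    rw [Complex.betaIntegral, intervalIntegral.integral_of_le (by norm_num : (0:ℝ) ≤ 1),
      MeasureTheory.integral_Ioc_eq_integral_Ioo]
    have hofr : (∫ t in Ioo (0:ℝ) 1, ((t ^ (-(1:ℝ)/4) * (1-t) ^ (-(1:ℝ)/4) : ℝ) : ℂ))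
        = ((∫ u in Ioo (0:ℝ) 1, u ^ (-(1:ℝ)/4) * (1-u) ^ (-(1:ℝ)/4) : ℝ) : ℂ) :=
      integral_ofReal
    rw [← hofr]
    refine setIntegral_congr_fun measurableSet_Ioo fun x hx => ?_
    obtain ⟨hx0, hx1⟩ := hx
    have h1x : (0:ℝ) < 1 - x := by linarith
    rw [Complex.ofReal_mul, Complex.ofReal_cpow hx0.le, Complex.ofReal_cpow h1x.le]
    push_cast
    norm_num
  rw [hbeta] at hgam
  have h32 : (3/4 + 3/4 : ℂ) = ((3/2 : ℝ) : ℂ) := by norm_num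
  have h34 : (3/4 : ℂ) = ((3/4 : ℝ) : ℂ) := by norm_num
  rw [h32, h34, Complex.Gamma_ofReal, Complex.Gamma_ofReal] at hgam
  have hg32 : Real.Gamma (3/2) ≠ 0 := (Real.Gamma_pos_of_pos (by norm_num)).ne'
  rw [eq_div_iff hg32, mul_comm]
  have := hgam
  rw [← Complex.ofReal_mul, ← Complex.ofReal_mul] at this
  exact_mod_cast this.symm

lemma phi_image : (fun u : ℝ => 2*u/(1-u)) '' (Ioo 0 1) = Ioi (0:ℝ) := by
  ext t
  simp only [mem_image, mem_Ioo, mem_Ioi]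
  constructor
  · rintro ⟨u, ⟨h0, h1⟩, rfl⟩
    exact div_pos (by linarith) (by linarith)
  · intro ht
    refine ⟨t/(2+t), ⟨by positivity, ?_⟩, ?_⟩
    · rw [div_lt_one (by linarith)]; linarith
    · have h2t : (2:ℝ) + t ≠ 0 := by positivity
      have hden : 1 - t/(2+t) = 2/(2+t) := by field_simp; ring
      rw [hden]
      field_simp

lemma phi_deriv : ∀ u ∈ Ioo (0:ℝ) 1,
    HasDerivWithinAt (fun u : ℝ => 2*u/(1-u)) (2/(1-u)^2) (Ioo 0 1) u := by
  intro u hu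
  have hb : (1:ℝ) - u ≠ 0 := by rw [sub_ne_zero]; exact fun hc => by simp [← hc] at hu
  have h1 : HasDerivAt (fun u : ℝ => 2*u) 2 u := by
    simpa using (hasDerivAt_id u).const_mul (2:ℝ)
  have h2 : HasDerivAt (fun u : ℝ => 1-u) (-1) u := by
    simpa using (hasDerivAt_id u).const_sub (1:ℝ)
  have := h1.div h2 hb
  refine this.hasDerivWithinAt.congr_deriv ?_
  ring

lemma phi_inj : InjOn (fun u : ℝ => 2*u/(1-u)) (Ioo 0 1) := by
  intro a ha b hb hab
  have ha1 : (1:ℝ) - a ≠ 0 := by rw [sub_ne_zero]; exact fun hc => by simp [← hc] at ha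
  have hb1 : (1:ℝ) - b ≠ 0 := by rw [sub_ne_zero]; exact fun hc => by simp [← hc] at hb
  simp only at hab
  rw [div_eq_div_iff ] at hab
  · nlinarith [hab]
  · exact sub_ne_zero.mpr (fun hc => by simp [← hc] at ha)
  · exact sub_ne_zero.mpr (fun hc => by simp [← hc] at hb)






lemma stepA : ∫ x in Ioi (0:ℝ), k x = ∫ t in Ioi (0:ℝ), g t := by
  rw [← integral_comp_rpow_Ioi g (by norm_num : (4:ℝ) ≠ 0)]
  refine setIntegral_congr_fun measurableSet_Ioi fun x hx => ?_
  have hx0 : (0:ℝ) < x := hx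
  rw [smul_eq_mul]
  unfold g k
  have h2 : (x ^ (4:ℝ)) ^ (-(1:ℝ)/4) = x⁻¹ := by
    rw [← Real.rpow_mul hx0.le]
    norm_num
    exact Real.rpow_neg_one x
  have h1 : x ^ (4:ℝ) = x^4 := by
    rw [← Real.rpow_natCast x 4]; norm_num
  have h3 : x ^ ((4:ℝ)-1) = x^3 := by
    rw [← Real.rpow_natCast x 3]; norm_num
  rw [h2, h1, h3]
  have hs : Real.sqrt (2 + x^4) ≠ 0 := by
    have : (0:ℝ) < 2 + x^4 := by positivity
    positivity
  field_simp
  ring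

lemma stepB : ∫ t in Ioi (0:ℝ), g t
    = 2 ^ (-(11:ℝ)/4) * ∫ u in Ioo (0:ℝ) 1, u ^ (-(1:ℝ)/4) * (1-u) ^ (-(1:ℝ)/4) := by
  rw [← phi_image, integral_image_eq_integral_abs_deriv_smul measurableSet_Ioo phi_deriv phi_inj g,
    ← integral_const_mul]
  exact setIntegral_congr_fun measurableSet_Ioo fun u hu => integrand_simp u hu.1 hu.2

lemma integral_k : ∫ x in Ioi (0:ℝ), k x
    = 2 ^ (-(11:ℝ)/4) * (Real.Gamma (3/4) * Real.Gamma (3/4) / Real.Gamma (3/2)) := by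
  rw [stepA, stepB, beta_Ioo]

lemma final_arith :
    16/5 * ((2:ℝ) ^ (-(11:ℝ)/4) * (Real.Gamma (3/4) * Real.Gamma (3/4) / Real.Gamma (3/2)))
      = 2 ^ ((3:ℝ)/4) * Real.sqrt π * Real.Gamma (3/4) / (5 * Real.Gamma (5/4)) := by
  have hΓ34 : 0 < Real.Gamma (3/4) := Real.Gamma_pos_of_pos (by norm_num)
  have hΓ14 : 0 < Real.Gamma (1/4) := Real.Gamma_pos_of_pos (by norm_num)
  have hΓ32 : 0 < Real.Gamma (3/2) := Real.Gamma_pos_of_pos (by norm_num)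
  have hΓ54 : 0 < Real.Gamma (5/4) := Real.Gamma_pos_of_pos (by norm_num)
  have hG32 : Real.Gamma (3/2) = Real.sqrt π / 2 := by
    have h := Real.Gamma_add_one (by norm_num : (1/2:ℝ) ≠ 0)
    rw [Real.Gamma_one_half_eq] at h
    rw [show (3/2:ℝ) = 1/2 + 1 by norm_num, h]; ring
  have hG54 : Real.Gamma (5/4) = Real.Gamma (1/4) / 4 := by
    have h := Real.Gamma_add_one (by norm_num : (1/4:ℝ) ≠ 0)
    rw [show (5/4:ℝ) = 1/4 + 1 by norm_num, h]; ring
  have hG14 : Real.Gamma (1/4) * Real.Gamma (3/4) = Real.sqrt 2 * π := by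
    have h := Real.Gamma_mul_Gamma_one_sub (1/4)
    rw [show (1:ℝ) - 1/4 = 3/4 by norm_num, show π * (1/4) = π/4 by ring,
      Real.sin_pi_div_four] at h
    have h2 : Real.sqrt 2 * Real.sqrt 2 = 2 := Real.mul_self_sqrt (by norm_num)
    have hne : Real.sqrt 2 / 2 ≠ 0 := by positivity
    rw [h, div_eq_iff hne]
    linear_combination (-(π/2)) * h2
  -- now take logs
  have hL : (0:ℝ) < 16/5 * ((2:ℝ) ^ (-(11:ℝ)/4) * (Real.Gamma (3/4) * Real.Gamma (3/4) / Real.Gamma (3/2))) := by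
    have := Real.rpow_pos_of_pos (two_pos (α := ℝ)) (-(11:ℝ)/4)
    positivity
  have hR : (0:ℝ) < 2 ^ ((3:ℝ)/4) * Real.sqrt π * Real.Gamma (3/4) / (5 * Real.Gamma (5/4)) := by
    have := Real.rpow_pos_of_pos (two_pos (α := ℝ)) ((3:ℝ)/4)
    have := Real.sqrt_pos.mpr pi_pos
    positivity
  rw [← Real.exp_log hL, ← Real.exp_log hR]
  congr 1
  have hsp : (0:ℝ) < Real.sqrt π := Real.sqrt_pos.mpr pi_pos
  have e2 : (0:ℝ) < (2:ℝ) ^ (-(11:ℝ)/4) := Real.rpow_pos_of_pos two_pos _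
  have e3 : (0:ℝ) < (2:ℝ) ^ ((3:ℝ)/4) := Real.rpow_pos_of_pos two_pos _
  rw [Real.log_mul (by norm_num) (by positivity), Real.log_mul e2.ne' (by positivity),
    Real.log_div (by positivity) hΓ32.ne', Real.log_mul hΓ34.ne' hΓ34.ne',
    Real.log_div (by positivity) (by positivity : (5 * Real.Gamma (5/4)) ≠ 0),
    Real.log_mul (by positivity : ((2:ℝ)^((3:ℝ)/4) * Real.sqrt π) ≠ 0) hΓ34.ne',
    Real.log_mul e3.ne' hsp.ne', Real.log_mul (by norm_num : (5:ℝ) ≠ 0) hΓ54.ne',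
    Real.log_rpow two_pos, Real.log_rpow two_pos,
    Real.log_div (by norm_num : (16:ℝ) ≠ 0) (by norm_num : (5:ℝ) ≠ 0)]
  have f1 : Real.log (Real.Gamma (1/4)) + Real.log (Real.Gamma (3/4))
      = 1/2 * Real.log 2 + Real.log π := by
    rw [← Real.log_mul hΓ14.ne' hΓ34.ne', hG14,
      Real.log_mul (by positivity : Real.sqrt 2 ≠ 0) pi_pos.ne', Real.log_sqrt (by norm_num)]
    ring
  have f2 : Real.log (Real.Gamma (3/2)) = Real.log (Real.sqrt π) - Real.log 2 := by
    rw [hG32, Real.log_div hsp.ne' (by norm_num)]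
  have f3 : Real.log (Real.Gamma (5/4)) = Real.log (Real.Gamma (1/4)) - 2 * Real.log 2 := by
    rw [hG54, Real.log_div hΓ14.ne' (by norm_num), show (4:ℝ) = 2^2 by norm_num, Real.log_pow]
    push_cast; ring
  have f4 : Real.log (Real.sqrt π) = 1/2 * Real.log π := by
    rw [Real.log_sqrt pi_pos.le]; ring
  have f5 : Real.log 16 = 4 * Real.log 2 := by
    rw [show (16:ℝ) = 2^4 by norm_num, Real.log_pow]; push_cast; ring
  rw [f2, f3, f4, f5]
  linarith [f1]




end Foldy

open MeasureTheory

/-- The improper integral `∫₀^∞ (1 + x⁴ - x²√(2 + x⁴)) dx` converges and equals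
`2^{3/4} √π Γ(3/4)/(5 Γ(5/4))`. -/
theorem foldy_integral :
    IntegrableOn (fun x : ℝ => 1 + x ^ 4 - x ^ 2 * Real.sqrt (2 + x ^ 4))
        (Set.Ioi (0:ℝ)) volume ∧
      ∫ x in Set.Ioi (0:ℝ), (1 + x ^ 4 - x ^ 2 * Real.sqrt (2 + x ^ 4)) =
        (2:ℝ) ^ ((3:ℝ) / 4) * Real.sqrt Real.pi * Real.Gamma (3 / 4) /
          (5 * Real.Gamma (5 / 4)) := by
  constructor
  · exact Foldy.integrable_h
  · have h1 := Foldy.integral_h_eq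
    rw [Foldy.integral_k] at h1
    have h2 := Foldy.final_arith
    calc ∫ x in Set.Ioi (0:ℝ), (1 + x ^ 4 - x ^ 2 * Real.sqrt (2 + x ^ 4))
        = ∫ x in Set.Ioi (0:ℝ), Foldy.h x := rfl
      _ = 16/5 * ((2:ℝ) ^ (-(11:ℝ)/4) *
            (Real.Gamma (3/4) * Real.Gamma (3/4) / Real.Gamma (3/2))) := h1
      _ = (2:ℝ) ^ ((3:ℝ) / 4) * Real.sqrt Real.pi * Real.Gamma (3 / 4) /
            (5 * Real.Gamma (5 / 4)) := h2
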